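/- In the racbox-simulation setting, suppose perfect PR-correlations hold: a ⊕ b = x ∧ y at every point of positive probability. Then the mutual information of b̃ with Bob's guessing targets is maximal: computing entropic quantities with respect to the conditional distribution given the event y = true (respectively y = false), which has probability 1/2, one has I(b̃ : a ⊕ x | (ỹ, s); given y = true) = H(a ⊕ x | (ỹ, s); given y = true) and I(b̃ : a | (ỹ, s); given y = false) = H(a | (ỹ, s); given y = false). -/

import Mathlib

open scoped Classical

/-- A probability mass function on a finite type. -/
def IsPMF {Ω : Type*} [Fintype Ω] (P : Ω → ℝ) : Prop :=
  (∀ ω, 0 ≤ P ω) ∧ ∑ ω, P ω = 1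

/-- Probability of an event under a pmf. -/
noncomputable def Pr {Ω : Type*} [Fintype Ω] (P : Ω → ℝ) (E : Ω → Prop) : ℝ :=
  ∑ ω, if E ω then P ω else 0

/-- Shannon entropy (in bits) of a random variable `X` under pmf `P`,
with the convention `0 · log₂ 0 = 0`. -/
noncomputable def ent {Ω α : Type*} [Fintype Ω] [Fintype α]
    (P : Ω → ℝ) (X : Ω → α) : ℝ :=
  -∑ v : α, Pr P (fun ω => X ω = v) * Real.logb 2 (Pr P (fun ω => X ω = v))

/-- Conditional entropy `H(X|Y) = H(X,Y) - H(Y)`. -/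
noncomputable def condEnt {Ω α β : Type*} [Fintype Ω] [Fintype α] [Fintype β]
    (P : Ω → ℝ) (X : Ω → α) (Y : Ω → β) : ℝ :=
  ent P (fun ω => (X ω, Y ω)) - ent P Y

/-- Mutual information `I(X:Y) = H(X) + H(Y) - H(X,Y)`. -/
noncomputable def mutInf {Ω α β : Type*} [Fintype Ω] [Fintype α] [Fintype β]
    (P : Ω → ℝ) (X : Ω → α) (Y : Ω → β) : ℝ :=
  ent P X + ent P Y - ent P (fun ω => (X ω, Y ω))

/-- Conditional mutual information
`I(X:Y|Z) = H(X,Z) + H(Y,Z) - H(X,Y,Z) - H(Z)`. -/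
noncomputable def condMutInf {Ω α β γ : Type*} [Fintype Ω] [Fintype α] [Fintype β] [Fintype γ]
    (P : Ω → ℝ) (X : Ω → α) (Y : Ω → β) (Z : Ω → γ) : ℝ :=
  ent P (fun ω => (X ω, Z ω)) + ent P (fun ω => (Y ω, Z ω))
    - ent P (fun ω => (X ω, Y ω, Z ω)) - ent P Z

/-- The pmf conditioned on an event `E`. -/
noncomputable def condPmf {Ω : Type*} [Fintype Ω] (P : Ω → ℝ) (E : Ω → Prop) : Ω → ℝ :=
  fun ω => if E ω then P ω / Pr P E else 0

lemma ent_eq_of_inj {Ω α β : Type*} [Fintype Ω] [Fintype α] [Fintype β]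
    (Q : Ω → ℝ) (hQ : ∀ ω, 0 ≤ Q ω)
    (U : Ω → α) (V : Ω → β) (f : α → β) (hf : Function.Injective f)
    (h : ∀ ω, 0 < Q ω → V ω = f (U ω)) :
    ent Q V = ent Q U := by
  have hPr : ∀ u, Pr Q (fun ω => V ω = f u) = Pr Q (fun ω => U ω = u) := by
    intro u
    unfold Pr
    refine Finset.sum_congr rfl fun ω _ => ?_
    dsimp only
    rcases (hQ ω).lt_or_eq with hpos | h0
    · simp only [h ω hpos]
      simp [hf.eq_iff]
    · simp [← h0]
  have hPr0 : ∀ v : β, (∀ u, f u ≠ v) → Pr Q (fun ω => V ω = v) = 0 := by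
    intro v hv
    unfold Pr
    refine Finset.sum_eq_zero fun ω _ => ?_
    dsimp only
    rcases (hQ ω).lt_or_eq with hpos | h0
    · rw [if_neg]; rw [h ω hpos]; exact hv _
    · simp [← h0]
  unfold ent
  congr 1
  rw [← Finset.sum_subset (Finset.subset_univ (Finset.univ.image f))
      (fun v _ hv => by
        have hnv : ∀ u, f u ≠ v := fun u hu =>
          hv (Finset.mem_image.2 ⟨u, Finset.mem_univ _, hu⟩)
        rw [hPr0 v hnv]; simp)]
  rw [Finset.sum_image (fun p _ q _ hpq => hf hpq)]
  exact Finset.sum_congr rfl fun u _ => by rw [hPr u]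

/-- **Lemma 4.** In the racbox-simulation setting, if perfect PR-correlations
`a ⊕ b = x ∧ y` hold at every point of positive probability, then
`I(b̃ : a ⊕ x | (ỹ, s))` computed given `y = true` equals
`H(a ⊕ x | (ỹ, s))` given `y = true`, and
`I(b̃ : a | (ỹ, s))` computed given `y = false` equals
`H(a | (ỹ, s))` given `y = false`. -/
theorem pr_simulation_max_condMutInf
    {Ω S : Type*} [Fintype Ω] [Fintype S]
    (P : Ω → ℝ) (hP : IsPMF P)
    (x y z : Ω → Bool) (s : Ω → S)
    (hindep : ∀ (vx vy vz : Bool) (vs : S),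
      Pr P (fun ω => x ω = vx ∧ y ω = vy ∧ z ω = vz ∧ s ω = vs)
        = Pr P (fun ω => x ω = vx) * Pr P (fun ω => y ω = vy) *
            Pr P (fun ω => z ω = vz) * Pr P (fun ω => s ω = vs))
    (hx : ∀ v, Pr P (fun ω => x ω = v) = 1/2)
    (hy : ∀ v, Pr P (fun ω => y ω = v) = 1/2)
    (hz : ∀ v, Pr P (fun ω => z ω = v) = 1/2)
    (A F0 F1 : Bool × Bool × S → Bool) (G : Bool × S → Bool)
    (B : Bool × Bool × S × Bool → Bool)
    (a yt bt b : Ω → Bool)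
    (ha : ∀ ω, a ω = A (x ω, z ω, s ω))
    (hyt : ∀ ω, yt ω = G (y ω, s ω))
    (hbt : ∀ ω, bt ω = if yt ω then F1 (x ω, z ω, s ω) else F0 (x ω, z ω, s ω))
    (hb : ∀ ω, b ω = B (yt ω, bt ω, s ω, y ω))
    (hPR : ∀ ω, 0 < P ω → xor (a ω) (b ω) = (x ω && y ω)) :
    condMutInf (condPmf P (fun ω => y ω = true))
        bt (fun ω => xor (a ω) (x ω)) (fun ω => (yt ω, s ω))
      = condEnt (condPmf P (fun ω => y ω = true))
          (fun ω => xor (a ω) (x ω)) (fun ω => (yt ω, s ω)) ∧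
    condMutInf (condPmf P (fun ω => y ω = false))
        bt a (fun ω => (yt ω, s ω))
      = condEnt (condPmf P (fun ω => y ω = false))
          a (fun ω => (yt ω, s ω)) := by
  have main : ∀ (vy : Bool) (T : Ω → Bool) (g : Bool → Bool × S → Bool),
      (∀ ω, 0 < P ω → y ω = vy → T ω = g (bt ω) (yt ω, s ω)) →
      condMutInf (condPmf P (fun ω => y ω = vy)) bt T (fun ω => (yt ω, s ω))
        = condEnt (condPmf P (fun ω => y ω = vy)) T (fun ω => (yt ω, s ω)) := by
    intro vy T g hg
    set Q := condPmf P (fun ω => y ω = vy) with hQdef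
    have hPrY : Pr P (fun ω => y ω = vy) = 1/2 := hy vy
    have hQ : ∀ ω, 0 ≤ Q ω := by
      intro ω
      rw [hQdef]
      unfold condPmf
      split
      · exact div_nonneg (hP.1 ω) (by rw [hPrY]; norm_num)
      · exact le_refl 0
    have hsupp : ∀ ω, 0 < Q ω → 0 < P ω ∧ y ω = vy := by
      intro ω hpos
      rw [hQdef] at hpos
      unfold condPmf at hpos
      by_cases hE : y ω = vy
      · rw [if_pos hE, hPrY] at hpos
        refine ⟨?_, hE⟩
        by_contra hc
        push_neg at hc
        have : P ω = 0 := le_antisymm hc (hP.1 ω)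
        rw [this] at hpos; norm_num at hpos
      · rw [if_neg hE] at hpos; norm_num at hpos
    have hinj : Function.Injective
        (fun p : Bool × (Bool × S) => (p.1, g p.1 p.2, p.2)) := by
      intro p q hpq
      simp only [Prod.mk.injEq] at hpq
      exact Prod.ext hpq.1 hpq.2.2
    have key := ent_eq_of_inj Q hQ (fun ω => (bt ω, (yt ω, s ω)))
      (fun ω => (bt ω, T ω, (yt ω, s ω)))
      (fun p => (p.1, g p.1 p.2, p.2)) hinj
      (fun ω hpos => by
        obtain ⟨hP1, hP2⟩ := hsupp ω hpos
        simp only []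
        rw [hg ω hP1 hP2])
    simp only [condMutInf, condEnt]
    rw [key]
    ring
  constructor
  · refine main true (fun ω => xor (a ω) (x ω))
      (fun c w => B (w.1, c, w.2, true)) fun ω hpos hyω => ?_
    have h1 : xor (a ω) (b ω) = x ω := by
      have := hPR ω hpos
      rwa [hyω, Bool.and_true] at this
    have h2 : xor (a ω) (x ω) = b ω := by
      rw [← h1, ← Bool.xor_assoc, Bool.xor_self, Bool.false_xor]
    dsimp only
    rw [h2, hb ω, hyω]
  · refine main false a (fun c w => B (w.1, c, w.2, false)) fun ω hpos hyω => ?_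
    have h1 : xor (a ω) (b ω) = false := by
      have := hPR ω hpos
      rwa [hyω, Bool.and_false] at this
    have h2 : a ω = b ω := by
      rcases Bool.dichotomy (a ω) with h | h <;>
        rcases Bool.dichotomy (b ω) with h' | h' <;>
        simp [h, h'] at h1 ⊢
    dsimp only
    rw [h2, hb ω, hyω]
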